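/- The modulus of the theta function is invariant under the element γ₂ = ([[1,2],[0,1]]; 0): for every measurable f : ℝ^k → ℂ with κ_η(f) < ∞ for some η > k, every z ∈ ℍ, φ ∈ ℝ, and ξ₁, ξ₂ ∈ ℝ^k, one has |Θ_f(z + 2, φ; (ξ₁ + 2ξ₂, ξ₂))| = |Θ_f(z, φ; (ξ₁, ξ₂))|. -/

import Mathlib

open scoped RealInnerProductSpace
open MeasureTheory
open scoped ENNReal Classical

/-- ℝ^k as a Euclidean space. -/
abbrev E (k : ℕ) := EuclideanSpace ℝ (Fin k)

/-- `e(t) = exp(2πit)`. -/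
noncomputable def e (t : ℝ) : ℂ := Complex.exp (2 * Real.pi * Complex.I * t)

/-- `f_φ := R(k_φ)f`: equal to `f` when `φ ≡ 0 (mod 2π)`, to `w ↦ f(−w)` when
`φ ≡ π (mod 2π)`, and given by the oscillatory integral otherwise. -/
noncomputable def fphi {k : ℕ} (f : E k → ℂ) (φ : ℝ) : E k → ℂ :=
  fun w =>
    if ∃ m : ℤ, φ = 2 * Real.pi * m then f w
    else if ∃ m : ℤ, φ = Real.pi + 2 * Real.pi * m then f (-w)
    else ((|Real.sin φ| ^ (-(k : ℝ) / 2) : ℝ) : ℂ) *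
      ∫ v : E k,
        e (((1 / 2) * (‖w‖ ^ 2 + ‖v‖ ^ 2) * Real.cos φ - ⟪w, v⟫) / Real.sin φ) * f v

/-- `κ_η(f) = sup_{w,φ} (1+‖w‖²)^{η/2} |f_φ(w)|` (valued in `ℝ≥0∞`). -/
noncomputable def kappa {k : ℕ} (η : ℝ) (f : E k → ℂ) : ℝ≥0∞ :=
  ⨆ (w : E k) (φ : ℝ),
    ENNReal.ofReal ((1 + ‖w‖ ^ 2) ^ (η / 2) * ‖fphi f φ w‖)

/-- The lattice point `n ∈ ℤ^k` viewed as a vector in ℝ^k. -/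
noncomputable def intVec {k : ℕ} (n : Fin k → ℤ) : E k :=
  (EuclideanSpace.equiv (Fin k) ℝ).symm (fun i => (n i : ℝ))

/-- The Jacobi theta function
`Θ_f(z, φ; ξ) = y^{k/4} Σ_{n ∈ ℤ^k} f_φ((n − ξ₂)√y) e(½‖n − ξ₂‖² x + n·ξ₁)`,
where `z = x + iy`. -/
noncomputable def Theta {k : ℕ} (f : E k → ℂ) (z : ℂ) (φ : ℝ) (ξ : E k × E k) : ℂ :=
  ((z.im ^ ((k : ℝ) / 4) : ℝ) : ℂ) *
    ∑' n : Fin k → ℤ,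
      fphi f φ (Real.sqrt z.im • (intVec n - ξ.2)) *
        e ((1 / 2) * ‖intVec n - ξ.2‖ ^ 2 * z.re + ⟪intVec n, ξ.1⟫)


lemma e_add (a b : ℝ) : e (a + b) = e a * e b := by
  unfold e
  rw [← Complex.exp_add]
  congr 1
  push_cast
  ring

lemma e_int (m : ℤ) : e m = 1 := by
  unfold e
  rw [show (2 * (Real.pi : ℂ) * Complex.I * ((m : ℝ) : ℂ))
      = (m : ℂ) * (2 * Real.pi * Complex.I) by push_cast; ring]
  exact Complex.exp_int_mul_two_pi_mul_I m

lemma abs_e (t : ℝ) : ‖e t‖ = 1 := by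
  unfold e
  rw [show (2 * (Real.pi : ℂ) * Complex.I * (t : ℂ))
      = ((2 * Real.pi * t : ℝ) : ℂ) * Complex.I by push_cast; ring]
  exact Complex.norm_exp_ofReal_mul_I _

lemma normsq_intVec {k : ℕ} (n : Fin k → ℤ) :
    (‖intVec n‖ ^ 2 : ℝ) = ((∑ i, (n i) ^ 2 : ℤ) : ℝ) := by
  rw [← real_inner_self_eq_norm_sq]
  simp [intVec, PiLp.inner_apply, RCLike.inner_apply]
  push_cast
  ring_nf
  rw [EuclideanSpace.norm_eq, Real.sq_sqrt (by positivity)]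
  simp

/-- `|Θ_f|` is invariant under `γ₂ = ([[1,2],[0,1]]; 0)`:
`|Θ_f(z + 2, φ; (ξ₁ + 2ξ₂, ξ₂))| = |Θ_f(z, φ; (ξ₁, ξ₂))|`. -/
theorem theta_invariance_gamma2 {k : ℕ} (hk : 0 < k)
    (f : E k → ℂ) (hf : Measurable f)
    (η : ℝ) (hη : (k : ℝ) < η) (hκ : kappa η f < ⊤)
    (z : ℂ) (hz : 0 < z.im) (φ : ℝ) (ξ₁ ξ₂ : E k) :
    ‖Theta f (z + 2) φ (ξ₁ + (2 : ℝ) • ξ₂, ξ₂)‖ =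
      ‖Theta f z φ (ξ₁, ξ₂)‖ := by
  have key : Theta f (z + 2) φ (ξ₁ + (2 : ℝ) • ξ₂, ξ₂)
      = e (‖ξ₂‖ ^ 2) * Theta f z φ (ξ₁, ξ₂) := by
    unfold Theta
    simp only [Complex.add_im, Complex.add_re, Complex.im_ofNat, Complex.re_ofNat, add_zero]
    rw [mul_left_comm]
    congr 1
    rw [← tsum_mul_left]
    refine tsum_congr fun n => ?_
    have hsub : ‖intVec n - ξ₂‖ ^ 2
        = ‖intVec n‖ ^ 2 - 2 * ⟪intVec n, ξ₂⟫ + ‖ξ₂‖ ^ 2 := norm_sub_sq_real _ _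
    have hinner : ⟪intVec n, ξ₁ + (2 : ℝ) • ξ₂⟫
        = ⟪intVec n, ξ₁⟫ + 2 * ⟪intVec n, ξ₂⟫ := by
      rw [inner_add_right, real_inner_smul_right]
    have harg : (1 / 2) * ‖intVec n - ξ₂‖ ^ 2 * (z.re + 2) + ⟪intVec n, ξ₁ + (2 : ℝ) • ξ₂⟫
        = ((1 / 2) * ‖intVec n - ξ₂‖ ^ 2 * z.re + ⟪intVec n, ξ₁⟫)
          + (‖ξ₂‖ ^ 2 + ((∑ i, (n i) ^ 2 : ℤ) : ℝ)) := by
      rw [hinner, hsub, normsq_intVec]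
      ring
    rw [harg, e_add, e_add, e_add, e_int, mul_one]
    ring
  rw [key, norm_mul, abs_e, one_mul]
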